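/- If Z0 and Z1 are cyclic flats of M⁺ with Z0 − e = Z1 − e, then Z0 = Z1. -/

import Mathlib

open Set Matroid
open scoped Classical

namespace Paper

variable {α : Type*}

/-- A circuit of a matroid: a minimal dependent set. -/
def Circuit (M : Matroid α) (C : Set α) : Prop :=
  M.Dep C ∧ ∀ D ⊂ C, M.Indep D

/-- A coloop: an element of the ground set lying in no circuit. -/
def Coloop (M : Matroid α) (x : α) : Prop :=
  x ∈ M.E ∧ ∀ C, Circuit M C → x ∉ C

/-- The set of coloops of a matroid. -/
def coloops (M : Matroid α) : Set α := {x | Coloop M x}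

/-- A cyclic set: a subset of the ground set each of whose elements lies in a
circuit contained in the set (equivalently, the restriction has no coloops). -/
def Cyclic (M : Matroid α) (X : Set α) : Prop :=
  X ⊆ M.E ∧ ∀ x ∈ X, ∃ C, Circuit M C ∧ C ⊆ X ∧ x ∈ C

/-- A cyclic flat: a cyclic set that is also a flat. -/
def CyclicFlat (M : Matroid α) (X : Set α) : Prop :=
  Cyclic M X ∧ M.IsFlat X

/-- The rank of a set: the largest cardinality of an independent subset. -/
noncomputable def rk (M : Matroid α) (X : Set α) : ℕ :=
  sSup (Set.ncard '' {I | M.Indep I ∧ I ⊆ X})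

/-- The nullity of a set: `n(X) = |X| − r(X)`. -/
noncomputable def nullity (M : Matroid α) (X : Set α) : ℤ :=
  (X.ncard : ℤ) - rk M X

/-- Deletion of a single element: `M \ e`. -/
noncomputable def deleteElem (M : Matroid α) (e : α) : Matroid α :=
  M ↾ (M.E \ {e})

lemma key_cyclicFlat_mem (M : Matroid α) (e : α) {Z0 Z1 : Set α} (h0 : CyclicFlat M Z0)
    (h1 : M.IsFlat Z1) (h : Z0 \ {e} = Z1 \ {e}) (he0 : e ∈ Z0) : e ∈ Z1 := by
  obtain ⟨C, hC, hCZ, heC⟩ := h0.1.2 e he0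
  have hI : M.Indep (C \ {e}) := hC.2 _ (sdiff_singleton_ssubset.2 heC)
  have hecl : e ∈ M.closure (C \ {e}) := by
    rw [hI.mem_closure_iff]
    left
    rw [insert_diff_singleton, insert_eq_self.2 heC]
    exact hC.1
  have h2 : e ∈ M.closure (Z1 \ {e}) := by
    refine M.closure_subset_closure ?_ hecl
    rw [← h]
    exact diff_subset_diff_left hCZ
  exact ((M.closure_subset_closure diff_subset).trans h1.closure.subset) h2

theorem statement_6 (M : Matroid α) (hfin : M.E.Finite) (e : α) (he : e ∈ M.E)
    (Z0 Z1 : Set α) (h0 : CyclicFlat M Z0) (h1 : CyclicFlat M Z1)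
    (h : Z0 \ {e} = Z1 \ {e}) : Z0 = Z1 := by
  ext x
  by_cases hx : x = e
  · subst hx
    exact ⟨fun hx0 => key_cyclicFlat_mem M x h0 h1.2 h hx0,
      fun hx1 => key_cyclicFlat_mem M x h1 h0.2 h.symm hx1⟩
  · constructor
    · intro hx0
      have : x ∈ Z1 \ {e} := h ▸ ⟨hx0, hx⟩
      exact this.1
    · intro hx1
      have : x ∈ Z0 \ {e} := h.symm ▸ ⟨hx1, hx⟩
      exact this.1

end Paper
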